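/- Let M be a pointed metric space, let Y be a real Banach space, and let Y₁ be an absolute summand of Y. If SA(M, Y) is dense in Lip₀(M, Y), then SA(M, Y₁) is dense in Lip₀(M, Y₁), where Y₁ is regarded as a Banach space with the norm inherited from Y. -/

import Mathlib

open Set Metric NNReal MeasureTheory

/-- A Lipschitz map vanishing at the base point `z`, i.e. an element of `Lip₀(M,Y)`. -/
def IsLip0 {M Y : Type*} [MetricSpace M] [NormedAddCommGroup Y]
    (z : M) (F : M → Y) : Prop :=
  (∃ K : ℝ≥0, LipschitzWith K F) ∧ F z = 0

/-- The Lipschitz norm `‖F‖_L = sup {‖F p - F q‖ / d(p,q) : p ≠ q}`. -/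
noncomputable def lipNorm {M Y : Type*} [MetricSpace M] [NormedAddCommGroup Y]
    (F : M → Y) : ℝ :=
  sSup {r : ℝ | ∃ p q : M, p ≠ q ∧ r = ‖F p - F q‖ / dist p q}

/-- `F` strongly attains its norm. -/
def StronglyAttains {M Y : Type*} [MetricSpace M] [NormedAddCommGroup Y]
    (F : M → Y) : Prop :=
  ∃ p q : M, p ≠ q ∧ ‖F p - F q‖ = lipNorm F * dist p q

/-- `F` is Lipschitz compact: its Lipschitz image is relatively compact. -/
def IsLipCompact {M Y : Type*} [MetricSpace M] [NormedAddCommGroup Y] [NormedSpace ℝ Y]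
    (F : M → Y) : Prop :=
  IsCompact (closure {y : Y | ∃ p q : M, p ≠ q ∧ y = (dist p q)⁻¹ • (F p - F q)})

/-- The pair `(M,Y)` has the Lip-BPB property witnessed by the function `η`. -/
def LipBPBWith (M : Type*) [MetricSpace M] (z : M)
    (Y : Type*) [NormedAddCommGroup Y] (η : ℝ → ℝ) : Prop :=
  (∀ ε > 0, η ε > 0) ∧
  ∀ ε > 0, ∀ F : M → Y, IsLip0 z F → lipNorm F = 1 →
    ∀ p q : M, p ≠ q → ‖F p - F q‖ > (1 - η ε) * dist p q →
      ∃ G : M → Y, IsLip0 z G ∧ ∃ r s : M, r ≠ s ∧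
        ‖G r - G s‖ = dist r s ∧ lipNorm G = 1 ∧
        lipNorm (fun x => G x - F x) < ε ∧
        (dist p r + dist q s) / dist p q < ε

/-- The pair `(M,Y)` has the Lip-BPB property. -/
def LipBPB (M : Type*) [MetricSpace M] (z : M)
    (Y : Type*) [NormedAddCommGroup Y] : Prop :=
  ∃ η : ℝ → ℝ, LipBPBWith M z Y η

/-- The pair `(M,Y)` has the Lip-BPB property for Lipschitz compact maps
witnessed by the function `η`. -/
def LipBPBCompactWith (M : Type*) [MetricSpace M] (z : M)
    (Y : Type*) [NormedAddCommGroup Y] [NormedSpace ℝ Y] (η : ℝ → ℝ) : Prop :=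
  (∀ ε > 0, η ε > 0) ∧
  ∀ ε > 0, ∀ F : M → Y, IsLip0 z F → IsLipCompact F → lipNorm F = 1 →
    ∀ p q : M, p ≠ q → ‖F p - F q‖ > (1 - η ε) * dist p q →
      ∃ G : M → Y, IsLip0 z G ∧ IsLipCompact G ∧ ∃ r s : M, r ≠ s ∧
        ‖G r - G s‖ = dist r s ∧ lipNorm G = 1 ∧
        lipNorm (fun x => G x - F x) < ε ∧
        (dist p r + dist q s) / dist p q < ε

/-- The pair `(M,Y)` has the Lip-BPB property for Lipschitz compact maps. -/
def LipBPBCompact (M : Type*) [MetricSpace M] (z : M)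
    (Y : Type*) [NormedAddCommGroup Y] [NormedSpace ℝ Y] : Prop :=
  ∃ η : ℝ → ℝ, LipBPBCompactWith M z Y η

/-- `SA(M,Y)` is dense in `Lip₀(M,Y)`. -/
def SADense (M : Type*) [MetricSpace M] (z : M)
    (Y : Type*) [NormedAddCommGroup Y] : Prop :=
  ∀ F : M → Y, IsLip0 z F → ∀ ε > 0,
    ∃ G : M → Y, IsLip0 z G ∧ StronglyAttains G ∧ lipNorm (fun x => G x - F x) < ε

/-- `SA_K(M,Y)` is dense in `Lipc(M,Y)`. -/
def SAKDense (M : Type*) [MetricSpace M] (z : M)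
    (Y : Type*) [NormedAddCommGroup Y] [NormedSpace ℝ Y] : Prop :=
  ∀ F : M → Y, IsLip0 z F → IsLipCompact F → ∀ ε > 0,
    ∃ G : M → Y, IsLip0 z G ∧ IsLipCompact G ∧ StronglyAttains G ∧
      lipNorm (fun x => G x - F x) < ε

/-- `N` is an absolute norm on `ℝ²` (written in curried form). -/
def IsAbsoluteNorm (N : ℝ → ℝ → ℝ) : Prop :=
  (∀ s t : ℝ, N s t = 0 ↔ s = 0 ∧ t = 0) ∧
  (∀ c s t : ℝ, N (c * s) (c * t) = |c| * N s t) ∧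
  (∀ s₁ t₁ s₂ t₂ : ℝ, N (s₁ + s₂) (t₁ + t₂) ≤ N s₁ t₁ + N s₂ t₂) ∧
  N 1 0 = 1 ∧ N 0 1 = 1 ∧ (∀ s t : ℝ, N s t = N |s| |t|)

/-- The closed subspace `Y₁` is an absolute summand of `Y`. -/
def IsAbsoluteSummand {Y : Type*} [NormedAddCommGroup Y] [NormedSpace ℝ Y]
    (Y₁ : Submodule ℝ Y) : Prop :=
  IsClosed (Y₁ : Set Y) ∧
  ∃ Z : Submodule ℝ Y, IsClosed (Z : Set Y) ∧
    ∃ N : ℝ → ℝ → ℝ, IsAbsoluteNorm N ∧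
      (∀ y : Y, ∃! p : Y₁ × Z, y = (p.1 : Y) + (p.2 : Y)) ∧
      (∀ (y₁ : Y₁) (w : Z), ‖(y₁ : Y) + (w : Y)‖ = N ‖(y₁ : Y)‖ ‖(w : Y)‖)

section helpers

variable {M Y : Type*} [MetricSpace M] [NormedAddCommGroup Y]

theorem saAux_lipNorm_le {W : M → Y} {c : ℝ} (hc : 0 ≤ c)
    (hW : ∀ x y, ‖W x - W y‖ ≤ c * dist x y) : lipNorm W ≤ c := by
  refine Real.sSup_le ?_ hc
  rintro r ⟨x, y, hxy, rfl⟩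
  rw [div_le_iff₀ (dist_pos.2 hxy)]
  exact hW x y

theorem saAux_lipNorm_nonneg (W : M → Y) : 0 ≤ lipNorm W := by
  refine Real.sSup_nonneg ?_
  rintro r ⟨x, y, hxy, rfl⟩
  positivity

theorem saAux_bddAbove {W : M → Y} {K : ℝ≥0} (hK : LipschitzWith K W) :
    BddAbove {r : ℝ | ∃ p q : M, p ≠ q ∧ r = ‖W p - W q‖ / dist p q} := by
  refine ⟨K, ?_⟩
  rintro r ⟨x, y, hxy, rfl⟩
  rw [div_le_iff₀ (dist_pos.2 hxy)]
  simpa [dist_eq_norm] using hK.dist_le_mul x y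

theorem saAux_norm_sub_le {W : M → Y} {K : ℝ≥0} (hK : LipschitzWith K W) (x y : M) :
    ‖W x - W y‖ ≤ lipNorm W * dist x y := by
  rcases eq_or_ne x y with rfl | hxy
  · simp
  · have hd := dist_pos.2 hxy
    have hmem : ‖W x - W y‖ / dist x y ∈
        {r : ℝ | ∃ p q : M, p ≠ q ∧ r = ‖W p - W q‖ / dist p q} := ⟨x, y, hxy, rfl⟩
    have h2 := le_csSup (saAux_bddAbove hK) hmem
    rw [div_le_iff₀ hd] at h2
    exact h2

theorem saAux_ge_ratio {W : M → Y} {K : ℝ≥0} (hK : LipschitzWith K W) {x y : M}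
    (hxy : x ≠ y) : ‖W x - W y‖ / dist x y ≤ lipNorm W :=
  le_csSup (saAux_bddAbove hK) ⟨x, y, hxy, rfl⟩

end helpers

section absnorm

variable {N : ℝ → ℝ → ℝ}

theorem saAux_N_s0 (hN : IsAbsoluteNorm N) (s : ℝ) : N s 0 = |s| := by
  obtain ⟨h0, hhom, hadd, h10, h01, habs⟩ := hN
  have := hhom s 1 0
  simpa [h10] using this

theorem saAux_N_0u (hN : IsAbsoluteNorm N) (u : ℝ) : N 0 u = |u| := by
  obtain ⟨h0, hhom, hadd, h10, h01, habs⟩ := hN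
  have := hhom u 0 1
  simpa [h01] using this

theorem saAux_N_mono2 (hN : IsAbsoluteNorm N) {s u u' : ℝ} (hu : 0 ≤ u) (huu' : u ≤ u') :
    N s u ≤ N s u' := by
  obtain ⟨h0, hhom, hadd, h10, h01, habs⟩ := hN
  rcases eq_or_lt_of_le (hu.trans huu') with h' | h'
  · have : u = 0 := le_antisymm (huu'.trans h'.symm.le) hu
    rw [this, ← h']
  · set l : ℝ := (u' + u) / (2 * u') with hl
    have hl0 : 0 ≤ l := by positivity
    have hl1 : l ≤ 1 := by rw [hl, div_le_one (by linarith)]; linarith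
    have habs' : N s (-u') = N s u' := by
      rw [habs s (-u'), abs_neg, ← habs s u']
    have hkey : N s u = N (l * s + (1 - l) * s) (l * u' + (1 - l) * (-u')) := by
      congr 1
      · ring
      · rw [hl]
        field_simp
        ring
    calc N s u = N (l * s + (1 - l) * s) (l * u' + (1 - l) * (-u')) := hkey
      _ ≤ N (l * s) (l * u') + N ((1 - l) * s) ((1 - l) * (-u')) := hadd _ _ _ _
      _ = l * N s u' + (1 - l) * N s (-u') := by
          rw [hhom l s u', hhom (1 - l) s (-u'), abs_of_nonneg hl0,
            abs_of_nonneg (by linarith : (0:ℝ) ≤ 1 - l)]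
      _ = N s u' := by rw [habs']; ring

theorem saAux_N_mono1 (hN : IsAbsoluteNorm N) {s s' u : ℝ} (hs : 0 ≤ s) (hss' : s ≤ s') :
    N s u ≤ N s' u := by
  obtain ⟨h0, hhom, hadd, h10, h01, habs⟩ := hN
  rcases eq_or_lt_of_le (hs.trans hss') with h' | h'
  · have : s = 0 := le_antisymm (hss'.trans h'.symm.le) hs
    rw [this, ← h']
  · set l : ℝ := (s' + s) / (2 * s') with hl
    have hl0 : 0 ≤ l := by positivity
    have hl1 : l ≤ 1 := by rw [hl, div_le_one (by linarith)]; linarith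
    have habs' : N (-s') u = N s' u := by
      rw [habs (-s') u, abs_neg, ← habs s' u]
    have hkey : N s u = N (l * s' + (1 - l) * (-s')) (l * u + (1 - l) * u) := by
      congr 1
      · rw [hl]
        field_simp
        ring
      · ring
    calc N s u = N (l * s' + (1 - l) * (-s')) (l * u + (1 - l) * u) := hkey
      _ ≤ N (l * s') (l * u) + N ((1 - l) * (-s')) ((1 - l) * u) := hadd _ _ _ _
      _ = l * N s' u + (1 - l) * N (-s') u := by
          rw [hhom l s' u, hhom (1 - l) (-s') u, abs_of_nonneg hl0,
            abs_of_nonneg (by linarith : (0:ℝ) ≤ 1 - l)]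
      _ = N s' u := by rw [habs']; ring

theorem saAux_N_fst_le (hN : IsAbsoluteNorm N) {s u : ℝ} (hs : 0 ≤ s) (hu : 0 ≤ u) :
    s ≤ N s u := by
  have h1 : N s 0 ≤ N s u := saAux_N_mono2 hN le_rfl hu
  rw [saAux_N_s0 hN, abs_of_nonneg hs] at h1
  exact h1

theorem saAux_N_snd_le (hN : IsAbsoluteNorm N) {s u : ℝ} (hs : 0 ≤ s) (hu : 0 ≤ u) :
    u ≤ N s u := by
  have h1 : N 0 u ≤ N s u := saAux_N_mono1 hN le_rfl hs
  rw [saAux_N_0u hN, abs_of_nonneg hu] at h1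
  exact h1

theorem saAux_N_le_add (hN : IsAbsoluteNorm N) {s u : ℝ} (hs : 0 ≤ s) (hu : 0 ≤ u) :
    N s u ≤ s + u := by
  have := hN.2.2.1 s 0 0 u
  simpa [saAux_N_s0 hN, saAux_N_0u hN, abs_of_nonneg hs, abs_of_nonneg hu] using this

end absnorm

theorem saAux_N_support {N : ℝ → ℝ → ℝ} (hN : IsAbsoluteNorm N) {a b : ℝ}
    (ha : 0 < a) (hb : 0 ≤ b) :
    ∃ t k : ℝ, 0 ≤ k ∧ k ≤ 1 ∧ 1 - b / a ≤ t ∧ t ≤ 1 ∧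
      (∀ s u : ℝ, 0 ≤ s → 0 ≤ u → t * s + k * u ≤ N s u) ∧ t * a + k * b = N a b := by
  rcases eq_or_lt_of_le hb with hb0 | hbpos
  · -- b = 0
    refine ⟨1, 0, le_rfl, zero_le_one, ?_, le_rfl, ?_, ?_⟩
    · have : 0 ≤ b / a := by positivity
      linarith
    · intro s u hs hu
      simpa using saAux_N_fst_le hN hs hu
    · rw [← hb0, saAux_N_s0 hN, abs_of_nonneg ha.le]; ring
  · -- b > 0
    set ψ : ℝ → ℝ := fun r => N 1 r with hψ
    have hψ0 : ψ 0 = 1 := hN.2.2.2.1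
    have hψmono : ∀ r r', 0 ≤ r → r ≤ r' → ψ r ≤ ψ r' := fun r r' h1 h2 =>
      saAux_N_mono2 hN h1 h2
    have hψ1 : ∀ r, 0 ≤ r → 1 ≤ ψ r := fun r hr => by
      have := hψmono 0 r le_rfl hr; rwa [hψ0] at this
    have hψlip : ∀ r r', 0 ≤ r → r ≤ r' → ψ r' ≤ ψ r + (r' - r) := by
      intro r r' h1 h2
      have := hN.2.2.1 1 r 0 (r' - r)
      have h3 : (1:ℝ) + 0 = 1 := by ring
      have h4 : r + (r' - r) = r' := by ring
      rw [h3, h4, saAux_N_0u hN, abs_of_nonneg (by linarith : (0:ℝ) ≤ r' - r)] at this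
      exact this
    have hhomog : ∀ s u : ℝ, 0 < s → N s u = s * ψ (u / s) := by
      intro s u hs
      have := hN.2.1 s 1 (u / s)
      rw [mul_one, mul_div_cancel₀ _ (ne_of_gt hs), abs_of_nonneg hs.le] at this
      exact this
    -- convexity (combo form): for 0 ≤ x < y < w, ψ y * (w - x) ≤ ψ x * (w - y) + ψ w * (y - x)
    have hconv : ∀ x y w : ℝ, 0 ≤ x → x < y → y < w →
        ψ y * (w - x) ≤ ψ x * (w - y) + ψ w * (y - x) := by
      intro x y w hx hxy hyw
      set m : ℝ := (w - y) / (w - x) with hm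
      have hwx : 0 < w - x := by linarith
      have hm0 : 0 < m := div_pos (by linarith) hwx
      have hm1 : m < 1 := by rw [hm, div_lt_one hwx]; linarith
      have hkey : ψ y = N (m * 1 + (1 - m) * 1) (m * x + (1 - m) * w) := by
        have h1 : m * 1 + (1 - m) * 1 = 1 := by ring
        have h2 : m * x + (1 - m) * w = y := by rw [hm]; field_simp; ring
        rw [h1, h2]
      have hle : ψ y ≤ m * ψ x + (1 - m) * ψ w := by
        rw [hkey]
        calc N (m * 1 + (1 - m) * 1) (m * x + (1 - m) * w)
            ≤ N (m * 1) (m * x) + N ((1 - m) * 1) ((1 - m) * w) := hN.2.2.1 _ _ _ _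
          _ = m * ψ x + (1 - m) * ψ w := by
              rw [hN.2.1 m 1 x, hN.2.1 (1 - m) 1 w, abs_of_nonneg hm0.le,
                abs_of_nonneg (by linarith : (0:ℝ) ≤ 1 - m)]
      have hm' : m * (w - x) = w - y := by rw [hm]; field_simp
      have h6 := mul_le_mul_of_nonneg_right hle hwx.le
      have e1 : (m * ψ x + (1 - m) * ψ w) * (w - x)
          = ψ x * (m * (w - x)) + ψ w * ((w - x) - m * (w - x)) := by ring
      rw [e1, hm'] at h6
      nlinarith [h6]
    set r₀ : ℝ := b / a with hr₀
    have hr₀pos : 0 < r₀ := by positivity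
    set Sl : Set ℝ := {v | ∃ r, 0 ≤ r ∧ r < r₀ ∧ v = (ψ r₀ - ψ r) / (r₀ - r)} with hSl
    have hSlne : Sl.Nonempty := ⟨(ψ r₀ - ψ 0) / (r₀ - 0), 0, le_rfl, hr₀pos, rfl⟩
    have hSlbdd : BddAbove Sl := by
      refine ⟨1, ?_⟩
      rintro v ⟨r, hr0, hrr, rfl⟩
      rw [div_le_one (by linarith)]
      have := hψlip r r₀ hr0 hrr.le
      linarith
    set k : ℝ := sSup Sl with hk
    have hk1 : k ≤ 1 := csSup_le hSlne (by
      rintro v ⟨r, hr0, hrr, rfl⟩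
      rw [div_le_one (by linarith)]
      have := hψlip r r₀ hr0 hrr.le
      linarith)
    have hk0 : 0 ≤ k := by
      have hmem : (ψ r₀ - ψ 0) / (r₀ - 0) ∈ Sl := ⟨0, le_rfl, hr₀pos, rfl⟩
      have h1 : 0 ≤ (ψ r₀ - ψ 0) / (r₀ - 0) := by
        apply div_nonneg _ (by linarith)
        have := hψmono 0 r₀ le_rfl hr₀pos.le
        linarith
      exact h1.trans (le_csSup hSlbdd hmem)
    set t : ℝ := ψ r₀ - k * r₀ with ht
    have hsupline : ∀ r, 0 ≤ r → t + k * r ≤ ψ r := by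
      intro r hr
      rcases lt_trichotomy r r₀ with hlt | heq | hgt
      · have hmem : (ψ r₀ - ψ r) / (r₀ - r) ∈ Sl := ⟨r, hr, hlt, rfl⟩
        have h1 := le_csSup hSlbdd hmem
        rw [div_le_iff₀ (by linarith)] at h1
        rw [ht]
        nlinarith
      · rw [heq, ht]; ring_nf; exact le_rfl
      · have h1 : k ≤ (ψ r - ψ r₀) / (r - r₀) := by
          apply csSup_le hSlne
          rintro v ⟨x, hx0, hxr, rfl⟩
          rw [div_le_div_iff₀ (by linarith) (by linarith)]
          have := hconv x r₀ r hx0 hxr hgt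
          nlinarith
        rw [le_div_iff₀ (by linarith)] at h1
        rw [ht]
        nlinarith
    have ht1 : t ≤ 1 := by
      have := hsupline 0 le_rfl
      rw [hψ0] at this
      linarith
    refine ⟨t, k, hk0, hk1, ?_, ht1, ?_, ?_⟩
    · rw [ht]
      have h1 := hψ1 r₀ hr₀pos.le
      nlinarith
    · intro s u hs hu
      rcases eq_or_lt_of_le hs with hs0 | hspos
      · rw [← hs0, saAux_N_0u hN, abs_of_nonneg hu]
        nlinarith
      · have h1 := hsupline (u / s) (by positivity)
        have h2 := hhomog s u hspos
        rw [h2]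
        have h3 := mul_le_mul_of_nonneg_left h1 hspos.le
        calc t * s + k * u = s * (t + k * (u / s)) := by field_simp
          _ ≤ s * ψ (u / s) := h3
    · have h2 := hhomog a b ha
      rw [h2, ht]
      have e : r₀ * a = b := by rw [hr₀]; field_simp
      linear_combination (-k) * e

set_option maxHeartbeats 2000000 in
/-- If `Y₁` is an absolute summand of `Y` and `SA(M, Y)` is dense in `Lip₀(M, Y)`, then
`SA(M, Y₁)` is dense in `Lip₀(M, Y₁)`. -/
theorem saDense_absoluteSummand {M Y : Type*} [MetricSpace M] [CompleteSpace M]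
    [NormedAddCommGroup Y] [NormedSpace ℝ Y] [CompleteSpace Y]
    (z : M) (Y₁ : Submodule ℝ Y) (h₁ : IsAbsoluteSummand Y₁)
    (h : SADense M z Y) :
    SADense M z Y₁ := by
  obtain ⟨hY₁cl, Z, hZcl, N, hN, hdec, hnorm⟩ := h₁
  choose dc hdc using fun y : Y => (hdec y).exists
  have huniq : ∀ (y : Y) (a : Y₁) (b : Z), y = (a : Y) + (b : Y) → (a, b) = dc y := by
    intro y a b hab
    exact (hdec y).unique hab (hdc y)
  have hdsub : ∀ v w : Y, (dc v).1 - (dc w).1 = (dc (v - w)).1 ∧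
      (dc v).2 - (dc w).2 = (dc (v - w)).2 := by
    intro v w
    have h2 : v - w = (((dc v).1 - (dc w).1 : Y₁) : Y) + (((dc v).2 - (dc w).2 : Z) : Y) := by
      push_cast
      conv_lhs => rw [hdc v, hdc w]
      abel
    have h3 := huniq _ _ _ h2
    exact ⟨congrArg Prod.fst h3, congrArg Prod.snd h3⟩
  have hnrm : ∀ v : Y, ‖v‖ = N ‖((dc v).1 : Y)‖ ‖((dc v).2 : Y)‖ := by
    intro v
    conv_lhs => rw [hdc v]
    exact hnorm _ _
  intro F hF ε hε
  obtain ⟨⟨KF, hKF⟩, hFz⟩ := hF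
  by_cases htp : ∃ a b : M, a ≠ b
  swap
  · exfalso
    obtain ⟨G0, _, ⟨p, q, hpq, _⟩, _⟩ :=
      h (fun _ => 0) ⟨⟨0, LipschitzWith.const 0⟩, rfl⟩ 1 one_pos
    exact htp ⟨p, q, hpq⟩
  obtain ⟨a₁, b₁, hab₁⟩ := htp
  have hLFnn : 0 ≤ lipNorm F := saAux_lipNorm_nonneg F
  set LF := lipNorm F with hLF
  rcases eq_or_lt_of_le hLFnn with hLF0 | hLFpos
  · -- degenerate case : F ≡ 0
    have hF0' : ∀ x, F x = 0 := by
      intro x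
      have h1 := saAux_norm_sub_le hKF x z
      rw [← hLF, ← hLF0, zero_mul] at h1
      have h2 : F x - F z = 0 := norm_le_zero_iff.1 h1
      rw [hFz, sub_zero] at h2
      exact h2
    have hl0 : lipNorm (fun _ : M => (0 : Y₁)) = 0 :=
      le_antisymm (saAux_lipNorm_le le_rfl (by intro x y; simp)) (saAux_lipNorm_nonneg _)
    refine ⟨fun _ => 0, ⟨⟨0, LipschitzWith.const 0⟩, rfl⟩, ⟨a₁, b₁, hab₁, by rw [hl0]; simp⟩, ?_⟩
    have he : (fun x => (0 : Y₁) - F x) = fun _ => (0 : Y₁) := by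
      funext x; rw [hF0' x]; simp
    rw [he, hl0]
    exact hε
  · -- main case
    set δ := min (ε / 5) (LF / 4) with hδ
    have hδpos : 0 < δ := lt_min (by linarith) (by linarith)
    have hδε : δ ≤ ε / 5 := min_le_left _ _
    have hδL : δ ≤ LF / 4 := min_le_right _ _
    have hFYlip : LipschitzWith KF (fun x => (F x : Y)) := by
      apply LipschitzWith.of_dist_le_mul
      intro x y
      have := hKF.dist_le_mul x y
      simpa [dist_eq_norm] using this
    obtain ⟨G, hG, ⟨p, q, hpq, hGatt⟩, hGclose⟩ :=
      h (fun x => (F x : Y)) ⟨⟨KF, hFYlip⟩, by show ((F z : Y)) = 0; rw [hFz]; simp⟩ δ hδpos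
    obtain ⟨⟨KG, hKG⟩, hGz⟩ := hG
    have hLnn : 0 ≤ lipNorm G := saAux_lipNorm_nonneg G
    set L := lipNorm G with hL
    have hd : 0 < dist p q := dist_pos.2 hpq
    set W : M → Y := fun x => G x - (F x : Y) with hWdef
    have hWlip : LipschitzWith (KG + KF) W := hKG.sub hFYlip
    have hWpt : ∀ x y, ‖W x - W y‖ ≤ δ * dist x y := by
      intro x y
      exact (saAux_norm_sub_le hWlip x y).trans
        (mul_le_mul_of_nonneg_right hGclose.le dist_nonneg)
    have hWc : ∀ x, (dc (W x)).1 = (dc (G x)).1 - F x ∧ (dc (W x)).2 = (dc (G x)).2 := by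
      intro x
      have h2 : W x = (((dc (G x)).1 - F x : Y₁) : Y) + (((dc (G x)).2 : Z) : Y) := by
        push_cast
        simp only [hWdef]
        conv_lhs => rw [hdc (G x)]
        abel
      have h3 := huniq _ _ _ h2
      exact ⟨(congrArg Prod.fst h3).symm, (congrArg Prod.snd h3).symm⟩
    have hG2pt : ∀ x y, ‖(((dc (G x)).2 - (dc (G y)).2 : Z) : Y)‖ ≤ δ * dist x y := by
      intro x y
      have e1 : (dc (G x)).2 - (dc (G y)).2 = (dc (W x - W y)).2 := by
        rw [← (hWc x).2, ← (hWc y).2, (hdsub (W x) (W y)).2]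
      rw [e1]
      have h1 : ‖((dc (W x - W y)).2 : Y)‖ ≤ ‖W x - W y‖ := by
        rw [hnrm (W x - W y)]
        exact saAux_N_snd_le hN (norm_nonneg _) (norm_nonneg _)
      exact h1.trans (hWpt x y)
    have hG1pt : ∀ x y, ‖(((dc (G x)).1 - F x - ((dc (G y)).1 - F y) : Y₁) : Y)‖
        ≤ δ * dist x y := by
      intro x y
      have e1 : (dc (G x)).1 - F x - ((dc (G y)).1 - F y) = (dc (W x - W y)).1 := by
        rw [← (hWc x).1, ← (hWc y).1, ← (hdsub (W x) (W y)).1]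
      rw [e1]
      have h1 : ‖((dc (W x - W y)).1 : Y)‖ ≤ ‖W x - W y‖ := by
        rw [hnrm (W x - W y)]
        exact saAux_N_fst_le hN (norm_nonneg _) (norm_nonneg _)
      exact h1.trans (hWpt x y)
    have hGpt : ∀ x y, ‖G x - G y‖ ≤ L * dist x y := fun x y => saAux_norm_sub_le hKG x y
    have hFpt : ∀ x y, ‖F x - F y‖ ≤ LF * dist x y := fun x y => saAux_norm_sub_le hKF x y
    have hLFle : LF ≤ L + δ := by
      apply saAux_lipNorm_le (by linarith)
      intro x y
      have e1 : ((F x - F y : Y₁) : Y) = (G x - G y) - (W x - W y) := by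
        push_cast
        simp only [hWdef]
        abel
      calc ‖F x - F y‖ = ‖((F x - F y : Y₁) : Y)‖ := rfl
        _ = ‖(G x - G y) - (W x - W y)‖ := by rw [e1]
        _ ≤ ‖G x - G y‖ + ‖W x - W y‖ := norm_sub_le _ _
        _ ≤ L * dist x y + δ * dist x y := add_le_add (hGpt x y) (hWpt x y)
        _ = (L + δ) * dist x y := by ring
    have hLδ : LF / 2 ≤ L - δ := by linarith
    set u₁ : Y₁ := (dc (G p)).1 - (dc (G q)).1 with hu₁
    set u₂ : Z := (dc (G p)).2 - (dc (G q)).2 with hu₂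
    set a₀ : ℝ := ‖(u₁ : Y)‖ with ha₀
    set b₀ : ℝ := ‖(u₂ : Y)‖ with hb₀
    have ha₀nn : 0 ≤ a₀ := norm_nonneg _
    have hb₀nn : 0 ≤ b₀ := norm_nonneg _
    have hNab : N a₀ b₀ = L * dist p q := by
      rw [← hGatt, hnrm (G p - G q), ha₀, hb₀, hu₁, hu₂,
        (hdsub (G p) (G q)).1, (hdsub (G p) (G q)).2]
    have hb₀d : b₀ ≤ δ * dist p q := hG2pt p q
    have hNle : N a₀ b₀ ≤ a₀ + b₀ := saAux_N_le_add hN ha₀nn hb₀nn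
    have ha₀low : LF / 2 * dist p q ≤ a₀ := by
      nlinarith [mul_le_mul_of_nonneg_right hLδ hd.le]
    have ha₀pos : 0 < a₀ :=
      lt_of_lt_of_le (mul_pos (by linarith : (0:ℝ) < LF / 2) hd) ha₀low
    obtain ⟨t, k, hk0, hk1, htlow, ht1, hsupp, heqN⟩ := saAux_N_support hN ha₀pos hb₀nn
    have hba : b₀ / a₀ * LF ≤ 2 * δ := by
      rw [div_mul_eq_mul_div, div_le_iff₀ ha₀pos]
      have m1 : b₀ * LF ≤ δ * dist p q * LF := mul_le_mul_of_nonneg_right hb₀d hLFnn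
      have m2 : 2 * δ * (LF / 2 * dist p q) ≤ 2 * δ * a₀ :=
        mul_le_mul_of_nonneg_left ha₀low (by linarith : (0:ℝ) ≤ 2 * δ)
      calc b₀ * LF ≤ δ * dist p q * LF := m1
        _ = 2 * δ * (LF / 2 * dist p q) := by ring
        _ ≤ 2 * δ * a₀ := m2
    have hba2 : b₀ / a₀ ≤ 1 / 2 := by
      have h1 : b₀ / a₀ * LF ≤ 1 / 2 * LF := by linarith
      exact le_of_mul_le_mul_right h1 hLFpos
    have ht0 : (1:ℝ) / 2 ≤ t := by linarith
    obtain ⟨g, hgle, hgval⟩ := exists_dual_vector'' ℝ ((u₂ : Z) : Y)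
    have hgbd : ∀ v : Y, |g v| ≤ ‖v‖ := by
      intro v
      calc |g v| = ‖g v‖ := (Real.norm_eq_abs _).symm
        _ ≤ ‖g‖ * ‖v‖ := g.le_opNorm v
        _ ≤ 1 * ‖v‖ := mul_le_mul_of_nonneg_right hgle (norm_nonneg v)
        _ = ‖v‖ := one_mul _
    set e : Y₁ := a₀⁻¹ • u₁ with he
    have henorm : ‖(e : Y)‖ = 1 := by
      rw [he]
      push_cast
      rw [norm_smul, Real.norm_eq_abs, abs_of_nonneg (inv_nonneg.2 ha₀pos.le)]
      rw [← ha₀]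
      exact inv_mul_cancel₀ (ne_of_gt ha₀pos)
    set H : M → Y₁ := fun x => t • (dc (G x)).1 + (k * g ((dc (G x)).2 : Y)) • e with hH
    have hHdiff : ∀ x y : M, ((H x - H y : Y₁) : Y)
        = t • (((dc (G x)).1 - (dc (G y)).1 : Y₁) : Y)
          + (k * g ((dc (G x)).2 : Y) - k * g ((dc (G y)).2 : Y)) • (e : Y) := by
      intro x y
      simp only [hH]
      push_cast
      module
    have hgdiff : ∀ x y : M, |k * g ((dc (G x)).2 : Y) - k * g ((dc (G y)).2 : Y)|
        ≤ k * ‖(((dc (G x)).2 - (dc (G y)).2 : Z) : Y)‖ := by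
      intro x y
      have e1 : k * g ((dc (G x)).2 : Y) - k * g ((dc (G y)).2 : Y)
          = k * g ((((dc (G x)).2 - (dc (G y)).2 : Z)) : Y) := by
        rw [← mul_sub, ← map_sub]
        push_cast
        ring_nf
      rw [e1, abs_mul, abs_of_nonneg hk0]
      exact mul_le_mul_of_nonneg_left (hgbd _) hk0
    have hHpt : ∀ x y : M, ‖H x - H y‖ ≤ L * dist x y := by
      intro x y
      calc ‖H x - H y‖ = ‖((H x - H y : Y₁) : Y)‖ := rfl
        _ ≤ t * ‖(((dc (G x)).1 - (dc (G y)).1 : Y₁) : Y)‖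
            + k * ‖(((dc (G x)).2 - (dc (G y)).2 : Z) : Y)‖ := by
              rw [hHdiff x y]
              refine (norm_add_le _ _).trans ?_
              rw [norm_smul, norm_smul, henorm, mul_one, Real.norm_eq_abs,
                Real.norm_eq_abs, abs_of_nonneg (by linarith : (0:ℝ) ≤ t)]
              exact add_le_add le_rfl (hgdiff x y)
        _ ≤ N ‖(((dc (G x)).1 - (dc (G y)).1 : Y₁) : Y)‖
              ‖(((dc (G x)).2 - (dc (G y)).2 : Z) : Y)‖ :=
            hsupp _ _ (norm_nonneg _) (norm_nonneg _)
        _ = ‖G x - G y‖ := by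
            rw [hnrm (G x - G y), (hdsub (G x) (G y)).1, (hdsub (G x) (G y)).2]
        _ ≤ L * dist x y := hGpt x y
    have hHpq : ‖H p - H q‖ = L * dist p q := by
      have hgd : k * g ((dc (G p)).2 : Y) - k * g ((dc (G q)).2 : Y) = k * b₀ := by
        rw [← mul_sub, ← map_sub]
        have e2 : ((dc (G p)).2 : Y) - ((dc (G q)).2 : Y) = ((u₂ : Z) : Y) := by
          rw [hu₂]; push_cast; ring
        rw [e2, hgval, ← hb₀]
        norm_cast
      have e3 : ((H p - H q : Y₁) : Y) = (t + k * b₀ * a₀⁻¹) • ((u₁ : Y₁) : Y) := by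
        rw [hHdiff p q, hgd, ← hu₁, he]
        push_cast
        module
      calc ‖H p - H q‖ = ‖((H p - H q : Y₁) : Y)‖ := rfl
        _ = ‖(t + k * b₀ * a₀⁻¹) • ((u₁ : Y₁) : Y)‖ := by rw [e3]
        _ = |t + k * b₀ * a₀⁻¹| * a₀ := by rw [norm_smul, Real.norm_eq_abs, ← ha₀]
        _ = (t + k * b₀ * a₀⁻¹) * a₀ := by
            rw [abs_of_nonneg]
            have h7 : 0 ≤ k * b₀ * a₀⁻¹ :=
              mul_nonneg (mul_nonneg hk0 hb₀nn) (inv_nonneg.2 ha₀pos.le)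
            linarith
        _ = t * a₀ + k * b₀ := by
            field_simp
        _ = N a₀ b₀ := heqN
        _ = L * dist p q := hNab
    have hHz : H z = 0 := by
      have h00 : ((0 : Y₁), (0 : Z)) = dc 0 := huniq 0 0 0 (by simp)
      simp only [hH, hGz, ← h00]
      simp
    have hHlipW : LipschitzWith L.toNNReal H := by
      apply LipschitzWith.of_dist_le_mul
      intro x y
      rw [Real.coe_toNNReal _ hLnn, dist_eq_norm]
      exact hHpt x y
    have hlipH : lipNorm H = L := by
      refine le_antisymm (saAux_lipNorm_le hLnn hHpt) ?_
      have hmem : L ∈ {r : ℝ | ∃ x y : M, x ≠ y ∧ r = ‖H x - H y‖ / dist x y} := by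
        refine ⟨p, q, hpq, ?_⟩
        rw [hHpq]
        field_simp
      exact le_csSup (saAux_bddAbove hHlipW) hmem
    have hclosept : ∀ x y : M, ‖(H x - F x) - (H y - F y)‖
        ≤ (2 * δ + (1 - t) * LF) * dist x y := by
      intro x y
      have e4 : (((H x - F x) - (H y - F y) : Y₁) : Y)
          = t • (((dc (G x)).1 - F x - ((dc (G y)).1 - F y) : Y₁) : Y)
            + (k * g ((dc (G x)).2 : Y) - k * g ((dc (G y)).2 : Y)) • (e : Y)
            + (t - 1) • ((F x - F y : Y₁) : Y) := by
        simp only [hH]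
        push_cast
        module
      calc ‖(H x - F x) - (H y - F y)‖
          = ‖(((H x - F x) - (H y - F y) : Y₁) : Y)‖ := rfl
        _ ≤ t * ‖(((dc (G x)).1 - F x - ((dc (G y)).1 - F y) : Y₁) : Y)‖
            + k * ‖(((dc (G x)).2 - (dc (G y)).2 : Z) : Y)‖
            + (1 - t) * ‖((F x - F y : Y₁) : Y)‖ := by
              rw [e4]
              refine (norm_add_le _ _).trans ?_
              refine add_le_add ?_ ?_
              · refine (norm_add_le _ _).trans ?_
                refine add_le_add ?_ ?_
                · rw [norm_smul, Real.norm_eq_abs, abs_of_nonneg (by linarith : (0:ℝ) ≤ t)]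
                · rw [norm_smul, henorm, mul_one, Real.norm_eq_abs]
                  exact hgdiff x y
              · rw [norm_smul, Real.norm_eq_abs, abs_of_nonpos (by linarith : t - 1 ≤ 0)]
                rw [neg_sub]
            _ ≤ t * (δ * dist x y) + k * (δ * dist x y) + (1 - t) * (LF * dist x y) := by
                refine add_le_add (add_le_add ?_ ?_) ?_
                · exact mul_le_mul_of_nonneg_left (hG1pt x y) (by linarith)
                · exact mul_le_mul_of_nonneg_left (hG2pt x y) hk0
                · exact mul_le_mul_of_nonneg_left (hFpt x y) (by linarith)
            _ ≤ (2 * δ + (1 - t) * LF) * dist x y := by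
                have hd9 : (0:ℝ) ≤ dist x y := dist_nonneg
                have h9 : t * (δ * dist x y) ≤ 1 * (δ * dist x y) :=
                  mul_le_mul_of_nonneg_right ht1 (by positivity)
                have h10 : k * (δ * dist x y) ≤ 1 * (δ * dist x y) :=
                  mul_le_mul_of_nonneg_right hk1 (by positivity)
                nlinarith [h9, h10]
    have hclose2 : lipNorm (fun x => H x - F x) ≤ 2 * δ + (1 - t) * LF := by
      apply saAux_lipNorm_le ?_ hclosept
      have h5 : 0 ≤ (1 - t) * LF := mul_nonneg (by linarith) (by linarith)
      linarith
    have h1t : (1 - t) * LF ≤ 2 * δ := by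
      have h6 : 1 - t ≤ b₀ / a₀ := by linarith
      have h7 := mul_le_mul_of_nonneg_right h6 hLFnn
      linarith [hba]
    refine ⟨H, ⟨⟨L.toNNReal, hHlipW⟩, hHz⟩, ⟨p, q, hpq, by rw [hHpq, hlipH]⟩, ?_⟩
    calc lipNorm (fun x => H x - F x) ≤ 2 * δ + (1 - t) * LF := hclose2
      _ ≤ 4 * δ := by linarith
      _ ≤ 4 * (ε / 5) := by linarith
      _ < ε := by linarith
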